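/- For all natural numbers s and Q' with Q' ≥ s, the sum over S from s to Q' of C(S,s)·(Q' − S·(s+2)/(s+1) + s/(s+1)) equals 0. -/

import Mathlib

open Finset

lemma sumB (s Q' : ℕ) (h : s ≤ Q') :
    ∑ S ∈ Finset.Icc s Q', (S : ℚ) * (Nat.choose S s : ℚ)
      = (s + 1) * (Nat.choose (Q' + 2) (s + 2) : ℚ) - (Nat.choose (Q' + 1) (s + 1) : ℚ) := by
  induction Q', h using Nat.le_induction with
  | base =>
      simp [Nat.choose_self]
  | succ n hn ih =>
      rw [show n + 1 + 1 = n + 2 from rfl] at *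
      rw [← Finset.insert_Icc_right_eq_Icc_add_one (by omega), Finset.sum_insert (by simp), ih]
      have p1 : Nat.choose (n + 3) (s + 2) = Nat.choose (n + 2) (s + 1) + Nat.choose (n + 2) (s + 2) :=
        Nat.choose_succ_succ _ _
      have p2 : Nat.choose (n + 2) (s + 1) = Nat.choose (n + 1) s + Nat.choose (n + 1) (s + 1) :=
        Nat.choose_succ_succ _ _
      have p3 : (n + 2) * Nat.choose (n + 1) s = Nat.choose (n + 2) (s + 1) * (s + 1) :=
        Nat.add_one_mul_choose_eq (n + 1) s
      have q3 : ((n : ℚ) + 2) * (Nat.choose (n + 1) s : ℚ) = (Nat.choose (n + 2) (s + 1) : ℚ) * ((s : ℚ) + 1) := by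
        exact_mod_cast congrArg (Nat.cast : ℕ → ℚ) p3
      rw [p1] at *
      push_cast [p2] at q3 ⊢
      linarith [q3]

/-- Lemma 1 of the paper: for all naturals `s ≤ Q'`,
`∑_{S=s}^{Q'} C(S,s) · (Q' − S·(s+2)/(s+1) + s/(s+1)) = 0`, in ℚ. -/
theorem stmt_0 (s Q' : ℕ) (h : s ≤ Q') :
    ∑ S ∈ Finset.Icc s Q',
      (Nat.choose S s : ℚ) *
        ((Q' : ℚ) - (S : ℚ) * ((s : ℚ) + 2) / ((s : ℚ) + 1) + (s : ℚ) / ((s : ℚ) + 1)) = 0 := by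
  have hs1 : (s : ℚ) + 1 ≠ 0 := by positivity
  have hA : ∑ S ∈ Finset.Icc s Q', (Nat.choose S s : ℚ) = (Nat.choose (Q' + 1) (s + 1) : ℚ) := by
    exact_mod_cast congrArg (Nat.cast : ℕ → ℚ) (Nat.sum_Icc_choose Q' s)
  have hB := sumB s Q' h
  have key : ((Q' : ℚ) + 2) * (Nat.choose (Q' + 1) (s + 1) : ℚ)
      = (Nat.choose (Q' + 2) (s + 2) : ℚ) * ((s : ℚ) + 2) := by
    exact_mod_cast congrArg (Nat.cast : ℕ → ℚ) (Nat.add_one_mul_choose_eq (Q' + 1) (s + 1))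
  have expand : ∀ S ∈ Finset.Icc s Q',
      (Nat.choose S s : ℚ) * ((Q' : ℚ) - (S : ℚ) * ((s : ℚ) + 2) / ((s : ℚ) + 1) + (s : ℚ) / ((s : ℚ) + 1))
      = (Nat.choose S s : ℚ) * ((Q' : ℚ) + (s : ℚ) / ((s : ℚ) + 1))
        - ((s : ℚ) + 2) / ((s : ℚ) + 1) * ((S : ℚ) * (Nat.choose S s : ℚ)) := by
    intro S _
    field_simp
    ring
  rw [Finset.sum_congr rfl expand, Finset.sum_sub_distrib, ← Finset.sum_mul, ← Finset.mul_sum, hA, hB]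
  field_simp
  nlinarith [key]
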